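/- arXiv:1002.4790 — 3 statements merged into one kernel-verified Lean document; each statement's English description precedes it below -/
import Mathlib

section
/- Let X be a compact metric space, μ a finite Borel measure on X, F a finite set of continuous complex-valued functions on X, and ε > 0. Then every point x ∈ X has an open neighborhood U such that μ(closure(U) \ U) = 0 and |f(y) − f(y')| < ε for all y, y' ∈ U and all f ∈ F. -/
/-- On a compact metric space with a finite Borel measure, every point has
an open neighborhood whose boundary is null and on which each function of a given finite
family of continuous complex-valued functions oscillates by less than `ε`. -/
theorem stmt2 {X : Type*} [MetricSpace X] [CompactSpace X] [MeasurableSpace X] [BorelSpace X]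
    (μ : MeasureTheory.Measure X) [MeasureTheory.IsFiniteMeasure μ]
    (F : Finset C(X, ℂ)) (ε : ℝ) (hε : 0 < ε) (x : X) :
    ∃ U : Set X, IsOpen U ∧ x ∈ U ∧ μ (closure U \ U) = 0 ∧
      ∀ y ∈ U, ∀ y' ∈ U, ∀ f ∈ F, ‖f y - f y'‖ < ε := by
  set V : Set X := ⋂ f ∈ F, {y | ‖f y - f x‖ < ε / 2} with hV
  have hVopen : IsOpen V := by
    apply isOpen_biInter_finset
    intro f _
    have : Continuous fun y => ‖f y - f x‖ := by fun_prop
    exact isOpen_lt this continuous_const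
  have hxV : x ∈ V := by
    simp [hV, Set.mem_iInter]
    intro f _
    simpa using half_pos hε
  obtain ⟨δ, hδpos, hball⟩ := Metric.isOpen_iff.mp hVopen x hxV
  obtain ⟨r, hr, hrnull⟩ := MeasureTheory.exists_null_frontier_thickening μ {x}
    (show δ / 2 < δ by linarith)
  rw [Metric.thickening_singleton] at hrnull
  refine ⟨Metric.ball x r, Metric.isOpen_ball, Metric.mem_ball_self (by linarith [hr.1]),
    ?_, ?_⟩
  · have hsub : closure (Metric.ball x r) \ Metric.ball x r ⊆ frontier (Metric.ball x r) := by
      intro y hy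
      exact ⟨hy.1, fun h => hy.2 (by rwa [Metric.isOpen_ball.interior_eq] at h)⟩
    exact MeasureTheory.measure_mono_null hsub hrnull
  · intro y hy y' hy' f hf
    have hyV : y ∈ V := hball (Metric.ball_subset_ball hr.2.le hy)
    have hy'V : y' ∈ V := hball (Metric.ball_subset_ball hr.2.le hy')
    rw [hV] at hyV hy'V
    simp only [Set.mem_iInter, Set.mem_setOf_eq] at hyV hy'V
    calc ‖f y - f y'‖ ≤ ‖f y - f x‖ + ‖f x - f y'‖ := norm_sub_le_norm_sub_add_norm_sub _ _ _
      _ < ε / 2 + ε / 2 := add_lt_add (hyV f hf) (by simpa [norm_sub_rev] using hy'V f hf)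
      _ = ε := by ring
end

section
/- Let A be a unital C*-algebra whose only closed two-sided ideals are {0} and A, and let h ∈ A be a nonzero positive element. Then there exists ν > 0 such that τ(h) ≥ ν for every tracial state τ of A. -/
open ComplexOrder

private lemma stmt11_exists_star_mul_self {A : Type*} [CStarAlgebra A] [PartialOrder A]
    [StarOrderedRing A] {x : A} (hx : 0 ≤ x) :
    ∃ s : A, x = star s * s :=
  ⟨CFC.sqrt x, by
    rw [(IsSelfAdjoint.of_nonneg (CFC.sqrt_nonneg (a := x))).star_eq,
      CFC.sqrt_mul_sqrt_self x hx]⟩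

section TauFacts

variable {A : Type*} [CStarAlgebra A] [PartialOrder A] [StarOrderedRing A] (τ : A →L[ℂ] ℂ)
  (hτpos : ∀ a : A, 0 ≤ τ (star a * a))

include hτpos

private lemma stmt11_tpos {c : A} (hc : 0 ≤ c) : 0 ≤ τ c := by
  obtain ⟨t, rfl⟩ := stmt11_exists_star_mul_self hc
  exact hτpos t

private lemma stmt11_tmono {c d : A} (hcd : c ≤ d) : τ c ≤ τ d := by
  have := stmt11_tpos τ hτpos (sub_nonneg.2 hcd)
  rwa [map_sub, sub_nonneg] at this

private lemma stmt11_treal {c : A} (hc : IsSelfAdjoint c) : (τ c).im = 0 := by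
  have h1 := stmt11_tpos τ hτpos (CFC.posPart_nonneg c)
  have h2 := stmt11_tpos τ hτpos (CFC.negPart_nonneg c)
  rw [Complex.nonneg_iff] at h1 h2
  have hc' : τ c = τ c⁺ - τ c⁻ := by rw [← map_sub, CFC.posPart_sub_negPart c hc]
  rw [hc', Complex.sub_im, ← h1.2, ← h2.2]
  ring

private lemma stmt11_tskew {c : A} (hc : star c = -c) : (τ c).re = 0 := by
  have hsa : IsSelfAdjoint ((-Complex.I) • c) := by
    rw [IsSelfAdjoint, star_smul, hc]
    simp [smul_neg, neg_smul]
  have him := stmt11_treal τ hτpos hsa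
  have hcc : τ c = Complex.I * τ ((-Complex.I) • c) := by
    rw [map_smul, smul_eq_mul, ← mul_assoc]
    simp [Complex.I_mul_I]
  rw [hcc, Complex.mul_re, Complex.I_re, Complex.I_im, him]
  ring

/-- The key per-generator estimate: `|Re τ(k w k)| ≤ ‖v‖ · Re τ(h)` where `v` is the
selfadjoint part of `w` and `h = k * k` with `k` selfadjoint nonneg. -/
private lemma stmt11_gen {h k : A} (hk : k * k = h) (hksa : star k = k) (w : A) :
    |(τ (k * w * k)).re| ≤ ‖(2⁻¹ : ℂ) • (w + star w)‖ * (τ h).re := by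
  set v : A := (2⁻¹ : ℂ) • (w + star w) with hvdef
  have hvsa : IsSelfAdjoint v := by
    rw [IsSelfAdjoint, hvdef, star_smul, star_add, star_star, add_comm]
    norm_num
  have h2v : w + star w = (2 : ℂ) • v := by
    rw [hvdef, smul_smul]
    norm_num
  -- the skew part
  have hstarwv : star (w - v) = -(w - v) := by
    have hsw : star w = (2 : ℂ) • v - w := by rw [← h2v]; abel
    rw [star_sub, hvsa.star_eq, hsw, two_smul]
    abel
  have hskew : star (k * (w - v) * k) = -(k * (w - v) * k) := by
    rw [star_mul, star_mul, hksa, hstarwv]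
    noncomm_ring
  have hre0 : (τ (k * (w - v) * k)).re = 0 := stmt11_tskew τ hτpos hskew
  have hsplit : k * w * k = k * v * k + k * (w - v) * k := by noncomm_ring
  have hred : (τ (k * w * k)).re = (τ (k * v * k)).re := by
    rw [hsplit, map_add, Complex.add_re, hre0, add_zero]
  -- bound the selfadjoint part
  have hmid : k * (algebraMap ℝ A ‖v‖) * k = ‖v‖ • h := by
    rw [Algebra.algebraMap_eq_smul_one]
    rw [mul_smul_comm, mul_one, smul_mul_assoc, hk]
  have hmid' : k * (-(algebraMap ℝ A ‖v‖)) * k = -(‖v‖ • h) := by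
    rw [mul_neg, neg_mul, hmid]
  have hτsmul : τ (‖v‖ • h) = (‖v‖ : ℂ) * τ h := by
    rw [← Complex.coe_smul, map_smul, smul_eq_mul]
  have hupper : τ (k * v * k) ≤ (‖v‖ : ℂ) * τ h := by
    have hle := star_left_conjugate_le_conjugate hvsa.le_algebraMap_norm_self k
    rw [hksa] at hle
    calc τ (k * v * k) ≤ τ (k * (algebraMap ℝ A ‖v‖) * k) := stmt11_tmono τ hτpos hle
      _ = (‖v‖ : ℂ) * τ h := by rw [hmid, hτsmul]
  have hlower : -((‖v‖ : ℂ) * τ h) ≤ τ (k * v * k) := by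
    have hle := star_left_conjugate_le_conjugate (hvsa.neg_algebraMap_norm_le_self) k
    rw [hksa] at hle
    calc -((‖v‖ : ℂ) * τ h) = τ (k * (-(algebraMap ℝ A ‖v‖)) * k) := by
          rw [hmid', map_neg, hτsmul]
      _ ≤ τ (k * v * k) := stmt11_tmono τ hτpos hle
  have hτh := stmt11_tpos τ hτpos (hk ▸ (hksa ▸ star_mul_self_nonneg k))
  rw [Complex.nonneg_iff] at hτh
  have hmulre : ((‖v‖ : ℂ) * τ h).re = ‖v‖ * (τ h).re := by
    rw [Complex.mul_re]
    simp
  rw [hred]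
  rw [abs_le]
  constructor
  · have := (Complex.le_def.1 hlower).1
    rw [Complex.neg_re, hmulre] at this
    linarith
  · have := (Complex.le_def.1 hupper).1
    rw [hmulre] at this
    linarith

end TauFacts

/-- On a unital C*-algebra whose only closed two-sided ideals are `{0}`
and the whole algebra, every nonzero positive element has trace bounded below by some
`ν > 0` uniformly over all tracial states. -/
theorem stmt11 {A : Type*} [CStarAlgebra A]
    (hsimple : ∀ I : TwoSidedIdeal A, IsClosed (I : Set A) → I = ⊥ ∨ I = ⊤)
    (h : A) (hne : h ≠ 0) (hpos : ∃ b : A, h = star b * b) :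
    ∃ ν : ℝ, 0 < ν ∧
      ∀ τ : A →L[ℂ] ℂ, τ 1 = 1 → (∀ a : A, 0 ≤ τ (star a * a)) →
        (∀ a b : A, τ (a * b) = τ (b * a)) → (ν : ℂ) ≤ τ h := by
  letI := CStarAlgebra.spectralOrder A
  haveI := CStarAlgebra.spectralOrderedRing A
  obtain ⟨b, hb⟩ := hpos
  have hh : (0 : A) ≤ h := hb ▸ star_mul_self_nonneg b
  set k : A := CFC.sqrt h with hkdef
  have hk : k * k = h := CFC.sqrt_mul_sqrt_self h hh
  have hksa : star k = k := (IsSelfAdjoint.of_nonneg (CFC.sqrt_nonneg (a := h))).star_eq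
  -- the algebraic two-sided ideal generated by `h`, as an additive subgroup
  set G : Set A := {a | ∃ x y : A, a = x * h * y} with hGdef
  have hmulL : ∀ (c : A) {a : A}, a ∈ AddSubgroup.closure G → c * a ∈ AddSubgroup.closure G := by
    intro c a ha
    have hmem : (AddMonoidHom.mulLeft c) a ∈ (AddSubgroup.closure G).map (AddMonoidHom.mulLeft c) :=
      AddSubgroup.mem_map_of_mem _ ha
    rw [AddMonoidHom.map_closure] at hmem
    refine AddSubgroup.closure_mono ?_ hmem
    rintro z ⟨w, ⟨x, y, rfl⟩, rfl⟩
    exact ⟨c * x, y, by simp [AddMonoidHom.mulLeft, mul_assoc]⟩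
  have hmulR : ∀ (c : A) {a : A}, a ∈ AddSubgroup.closure G → a * c ∈ AddSubgroup.closure G := by
    intro c a ha
    have hmem : (AddMonoidHom.mulRight c) a ∈
        (AddSubgroup.closure G).map (AddMonoidHom.mulRight c) :=
      AddSubgroup.mem_map_of_mem _ ha
    rw [AddMonoidHom.map_closure] at hmem
    refine AddSubgroup.closure_mono ?_ hmem
    rintro z ⟨w, ⟨x, y, rfl⟩, rfl⟩
    exact ⟨x, y * c, by simp [AddMonoidHom.mulRight, mul_assoc]⟩
  have hLc : ∀ (x : A) {y : A}, y ∈ closure ((AddSubgroup.closure G : AddSubgroup A) : Set A) →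
      x * y ∈ closure ((AddSubgroup.closure G : AddSubgroup A) : Set A) :=
    fun x {y} hy => map_mem_closure (continuous_mul_left x) hy (fun a ha => hmulL x ha)
  have hRc : ∀ (y : A) {x : A}, x ∈ closure ((AddSubgroup.closure G : AddSubgroup A) : Set A) →
      x * y ∈ closure ((AddSubgroup.closure G : AddSubgroup A) : Set A) :=
    fun y {x} hx => map_mem_closure (f := fun b => b * y) (continuous_mul_right y) hx (fun a ha => hmulR y ha)
  -- the closed two-sided ideal
  set I : TwoSidedIdeal A := TwoSidedIdeal.mk' (closure ((AddSubgroup.closure G : AddSubgroup A) : Set A))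
    (subset_closure (AddSubgroup.zero_mem _))
    (fun hx hy => (AddSubgroup.closure G).topologicalClosure.add_mem hx hy)
    (fun hx => (AddSubgroup.closure G).topologicalClosure.neg_mem hx)
    (fun {x y} hy => hLc x hy)
    (fun {x y} hx => hRc y hx)
    with hIdef
  have hImem : ∀ x : A, x ∈ I ↔ x ∈ closure ((AddSubgroup.closure G : AddSubgroup A) : Set A) := by
    intro x
    rw [hIdef]
    exact TwoSidedIdeal.mem_mk' _ _ _ _ _ _ x
  have hIset : (I : Set A) = closure ((AddSubgroup.closure G : AddSubgroup A) : Set A) :=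
    Set.ext fun x => hImem x
  have hhI : h ∈ I := (hImem h).2 <| subset_closure <|
    AddSubgroup.subset_closure ⟨1, 1, by simp⟩
  have hItop : I = ⊤ := by
    rcases hsimple I (hIset ▸ isClosed_closure) with hbot | htop
    · exact absurd ((TwoSidedIdeal.mem_bot A).1 (hbot ▸ hhI)) hne
    · exact htop
  have hone : (1 : A) ∈ closure ((AddSubgroup.closure G : AddSubgroup A) : Set A) :=
    (hImem 1).1 (hItop ▸ TwoSidedIdeal.mem_top A)
  -- get `s ∈ S` close to `1`, hence invertible
  obtain ⟨s, hsS, hs1⟩ := Metric.mem_closure_iff.1 hone 1 one_pos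
  rw [dist_eq_norm] at hs1
  set U : Aˣ := Units.oneSub (1 - s) hs1 with hUdef
  have hUval : (U : A) = s := by simp [hUdef, Units.oneSub]
  set u : A := ((U⁻¹ : Aˣ) : A) with hudef
  have hus : u * s = 1 := by rw [hudef, ← hUval]; exact U.inv_mul
  -- key estimate by induction on membership in the algebraic ideal
  have key : ∀ z ∈ AddSubgroup.closure G, ∃ C : ℝ, 0 ≤ C ∧
      ∀ τ : A →L[ℂ] ℂ, (∀ a : A, 0 ≤ τ (star a * a)) →
        (∀ a b : A, τ (a * b) = τ (b * a)) →
        |(τ (u * z)).re| ≤ C * (τ h).re := by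
    intro z hz
    induction hz using AddSubgroup.closure_induction with
    | mem a ha =>
      obtain ⟨x, y, rfl⟩ := ha
      set w : A := y * (u * x) with hwdef
      refine ⟨‖(2⁻¹ : ℂ) • (w + star w)‖, norm_nonneg _, fun τ hτpos hτtr => ?_⟩
      have e1 : u * (x * h * y) = (u * x * k) * (k * y) := by
        rw [← hk]; noncomm_ring
      have e2 : (k * y) * (u * x * k) = k * w * k := by
        rw [hwdef]; noncomm_ring
      have e3 : τ (u * (x * h * y)) = τ (k * w * k) := by
        rw [e1, hτtr, e2]
      rw [e3]
      exact stmt11_gen τ hτpos hk hksa w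
    | zero =>
      refine ⟨0, le_rfl, fun τ hτpos hτtr => ?_⟩
      simp
    | add z₁ z₂ hz₁ hz₂ ih₁ ih₂ =>
      obtain ⟨C₁, hC₁, hB₁⟩ := ih₁
      obtain ⟨C₂, hC₂, hB₂⟩ := ih₂
      refine ⟨C₁ + C₂, by positivity, fun τ hτpos hτtr => ?_⟩
      rw [mul_add, map_add, Complex.add_re, add_mul]
      exact (abs_add_le _ _).trans (add_le_add (hB₁ τ hτpos hτtr) (hB₂ τ hτpos hτtr))
    | neg z hz ih =>
      obtain ⟨C, hC, hB⟩ := ih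
      refine ⟨C, hC, fun τ hτpos hτtr => ?_⟩
      rw [mul_neg, map_neg, Complex.neg_re, abs_neg]
      exact hB τ hτpos hτtr
  obtain ⟨C, hC0, hCb⟩ := key s hsS
  refine ⟨(C + 1)⁻¹, by positivity, fun τ hτ1 hτpos hτtr => ?_⟩
  have h1 : τ (u * s) = 1 := by rw [hus, hτ1]
  have hbound := hCb τ hτpos hτtr
  rw [h1] at hbound
  norm_num at hbound
  have hτh := stmt11_tpos τ hτpos hh
  rw [Complex.nonneg_iff] at hτh
  have hr : (C + 1)⁻¹ ≤ (τ h).re := by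
    rw [inv_eq_one_div, div_le_iff₀ (by positivity)]
    nlinarith [hτh.1]
  exact Complex.le_def.2 ⟨by rw [Complex.ofReal_re]; exact hr, (Complex.ofReal_im _).trans hτh.2⟩
end

section
/- Let A be a unital C*-algebra, k ≥ 1, and let φ, ψ : M_k(ℂ) → A be unital *-homomorphisms from the C*-algebra of k×k complex matrices into A that are approximately unitarily equivalent. Then there exists a unitary u ∈ A with φ(x) = u ψ(x) u* for all x ∈ M_k(ℂ). -/
open scoped Matrix

/-- If `c` commutes with a selfadjoint element `b`, then `c` commutes with any element of the
real continuous functional calculus applied to `b`. -/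
lemma commute_cfc_real {A : Type*} [CStarAlgebra A] {b : A} (hb : IsSelfAdjoint b) {c : A}
    (h : c * b = b * c) (f : ℝ → ℝ) : c * cfc f b = cfc f b * c := by
  have key : ∀ g : C(spectrum ℝ b, ℝ), c * cfcHom hb g = cfcHom hb g * c := by
    intro g
    set Φ : C(spectrum ℝ b, ℝ) →⋆ₐ[ℝ] A := cfcHom hb with hΦ
    set S : Subalgebra ℝ C(spectrum ℝ b, ℝ) :=
      (Subalgebra.centralizer ℝ ({c} : Set A)).comap Φ.toAlgHom with hS
    have hmemS : ∀ g : C(spectrum ℝ b, ℝ), g ∈ S ↔ c * Φ g = Φ g * c := by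
      intro g
      simp [hS, Subalgebra.mem_comap, Subalgebra.mem_centralizer_iff]
    have hclosed : IsClosed (S : Set C(spectrum ℝ b, ℝ)) := by
      have hset : (S : Set C(spectrum ℝ b, ℝ)) = ⇑Φ ⁻¹' {x : A | c * x = x * c} := by
        ext g
        simpa using hmemS g
      rw [hset]
      exact ((isClosed_eq (continuous_const.mul continuous_id)
        (continuous_id.mul continuous_const))).preimage (cfcHom_continuous hb)
    have hsep : S.SeparatesPoints := by
      intro x y hxy
      refine ⟨_, ⟨(ContinuousMap.id ℝ).restrict (spectrum ℝ b), ?_, rfl⟩, ?_⟩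
      · exact (hmemS _).mpr (by rw [hΦ, cfcHom_id hb]; exact h)
      · simpa using Subtype.coe_injective.ne hxy
    have htop := ContinuousMap.subalgebra_topologicalClosure_eq_top_of_separatesPoints S hsep
    have hg : g ∈ S := by
      have hg' : g ∈ S.topologicalClosure := by rw [htop]; trivial
      rwa [← SetLike.mem_coe, Subalgebra.topologicalClosure_coe, hclosed.closure_eq] at hg'
    exact (hmemS g).mp hg
  by_cases hf : ContinuousOn f (spectrum ℝ b)
  · rw [cfc_apply f b hb hf]
    exact key _
  · rw [cfc_apply_of_not_continuousOn b hf, mul_zero, zero_mul]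

/-- Two approximately unitarily equivalent unital *-homomorphisms from a
matrix algebra `M_k(ℂ)` (`k ≥ 1`) into a unital C*-algebra are exactly unitarily
equivalent. -/
theorem stmt12 {A : Type*} [CStarAlgebra A] (k : ℕ) (hk : 1 ≤ k)
    (φ ψ : Matrix (Fin k) (Fin k) ℂ →⋆ₐ[ℂ] A)
    (haue : ∀ (F : Finset (Matrix (Fin k) (Fin k) ℂ)) (ε : ℝ), 0 < ε →
      ∃ u : A, u ∈ unitary A ∧ ∀ x ∈ F, ‖φ x - u * ψ x * star u‖ < ε) :
    ∃ u : A, u ∈ unitary A ∧ ∀ x : Matrix (Fin k) (Fin k) ℂ, φ x = u * ψ x * star u := by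
  haveI : NeZero k := ⟨Nat.one_le_iff_ne_zero.mp hk⟩
  set i0 : Fin k := ⟨0, hk⟩ with hi0
  set E : Fin k → Fin k → Matrix (Fin k) (Fin k) ℂ :=
    fun i j => Matrix.single i j 1 with hE
  have hE1 : (∑ i, E i i) = 1 := by
    ext a b
    by_cases hab : a = b
    · subst hab
      simp [hE, Matrix.sum_apply, Matrix.single, Matrix.one_apply, ite_and,
        Finset.sum_ite_eq]
    · simp [hE, Matrix.sum_apply, Matrix.single, Matrix.one_apply, hab, ite_and,
        Finset.sum_ite_eq]
  set C : ℝ := ∑ i, ‖φ (E i i0)‖ with hC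
  have hC0 : 0 ≤ C := Finset.sum_nonneg fun _ _ => norm_nonneg _
  set ε : ℝ := (4 * (C + 1))⁻¹ with hε
  have hεpos : 0 < ε := by positivity
  obtain ⟨u, hu, hclose⟩ := haue (Finset.image (fun i => E i0 i) Finset.univ) ε hεpos
  have hu' := Unitary.mem_iff.mp hu
  -- basic norm facts
  have hone : ‖(1 : A)‖ ≤ 1 := by
    have h := CStarRing.norm_star_mul_self (x := (1 : A))
    simp only [star_one, one_mul] at h
    nlinarith [norm_nonneg (1 : A)]
  have hu_norm : ‖u‖ ≤ 1 := by
    have h := CStarRing.norm_star_mul_self (x := u)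
    rw [hu'.1] at h
    nlinarith [norm_nonneg u]
  have hsu_norm : ‖star u‖ ≤ 1 := by rwa [norm_star]
  -- the intertwiner
  set a : A := ∑ i, φ (E i i0) * u * ψ (E i0 i) with ha_def
  -- intertwining on matrix units
  have hbasis : ∀ p q : Fin k,
      φ (E p q) * a = φ (E p i0) * u * ψ (E i0 q) ∧
      a * ψ (E p q) = φ (E p i0) * u * ψ (E i0 q) := by
    intro p q
    constructor
    · rw [ha_def, Finset.mul_sum]
      rw [Finset.sum_eq_single q]
      · have hpq : E p q * E q i0 = E p i0 := by simp [hE]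
        simp only [mul_assoc]
        rw [← mul_assoc (φ (E p q)) (φ (E q i0)), ← map_mul, hpq]
      · intro i _ hiq
        have h0 : E p q * E i i0 = 0 := Matrix.single_mul_single_of_ne _ _ _ _ (Ne.symm hiq) _
        simp only [mul_assoc]
        rw [← mul_assoc (φ (E p q)) (φ (E i i0)), ← map_mul, h0, map_zero, zero_mul]
      · simp
    · rw [ha_def, Finset.sum_mul]
      rw [Finset.sum_eq_single p]
      · have hpq : E i0 p * E p q = E i0 q := by simp [hE]
        simp only [mul_assoc]
        rw [← map_mul, hpq]
      · intro i _ hip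
        have h0 : E i0 i * E p q = 0 := Matrix.single_mul_single_of_ne _ _ _ _ hip _
        simp only [mul_assoc]
        rw [← map_mul, h0, map_zero, mul_zero, mul_zero]
      · simp
  have hint : ∀ x : Matrix (Fin k) (Fin k) ℂ, φ x * a = a * ψ x := by
    intro x
    have hx := Matrix.matrix_eq_sum_single x
    calc φ x * a = φ (∑ i, ∑ j, Matrix.single i j (x i j)) * a := by rw [← hx]
      _ = a * ψ (∑ i, ∑ j, Matrix.single i j (x i j)) := by
          rw [map_sum, map_sum, Finset.sum_mul, Finset.mul_sum]
          refine Finset.sum_congr rfl fun i _ => ?_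
          rw [map_sum, map_sum, Finset.sum_mul, Finset.mul_sum]
          refine Finset.sum_congr rfl fun j _ => ?_
          have hsmul : Matrix.single i j (x i j) = x i j • E i j := by
            rw [hE, Matrix.smul_single, smul_eq_mul, mul_one]
          rw [hsmul, map_smul, map_smul, smul_mul_assoc, mul_smul_comm,
            (hbasis i j).1, (hbasis i j).2]
      _ = a * ψ x := by rw [← hx]
  -- norm estimate : ‖a - u‖ ≤ 1/4
  have hterm : ∀ i : Fin k, ‖u * ψ (E i0 i) - φ (E i0 i) * u‖ ≤ ε := by
    intro i
    have hmem : E i0 i ∈ Finset.image (fun i => E i0 i) Finset.univ := by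
      exact Finset.mem_image.mpr ⟨i, Finset.mem_univ i, rfl⟩
    have hd := hclose _ hmem
    have heq : u * ψ (E i0 i) - φ (E i0 i) * u
        = -((φ (E i0 i) - u * ψ (E i0 i) * star u) * u) := by
      rw [sub_mul, mul_assoc (u * ψ (E i0 i)), hu'.1, mul_one, neg_sub]
    rw [heq, norm_neg]
    calc ‖(φ (E i0 i) - u * ψ (E i0 i) * star u) * u‖
        ≤ ‖φ (E i0 i) - u * ψ (E i0 i) * star u‖ * ‖u‖ := norm_mul_le _ _
      _ ≤ ε * 1 := by
          apply mul_le_mul hd.le hu_norm (norm_nonneg _) hεpos.le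
      _ = ε := mul_one ε
  have hdiff : a - u = ∑ i, φ (E i i0) * (u * ψ (E i0 i) - φ (E i0 i) * u) := by
    have hu_eq : u = ∑ i, φ (E i i0) * (φ (E i0 i) * u) := by
      have : ∑ i, φ (E i i0) * (φ (E i0 i) * u) = (∑ i, φ (E i i) ) * u := by
        rw [Finset.sum_mul]
        refine Finset.sum_congr rfl fun i _ => ?_
        have hEii : E i i0 * E i0 i = E i i := by simp [hE]
        rw [← mul_assoc, ← map_mul, hEii]
      rw [this, ← map_sum, hE1, map_one, one_mul]
    have hsum : ∑ i, (φ (E i i0) * u * ψ (E i0 i) - φ (E i i0) * (φ (E i0 i) * u))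
        = a - u := by
      rw [Finset.sum_sub_distrib, ← ha_def, ← hu_eq]
    calc a - u = ∑ i, (φ (E i i0) * u * ψ (E i0 i) - φ (E i i0) * (φ (E i0 i) * u)) :=
          hsum.symm
      _ = ∑ i, φ (E i i0) * (u * ψ (E i0 i) - φ (E i0 i) * u) := by
          refine Finset.sum_congr rfl fun i _ => ?_
          rw [mul_sub, mul_assoc]
  have hnorm : ‖a - u‖ ≤ 4⁻¹ := by
    rw [hdiff]
    calc ‖∑ i, φ (E i i0) * (u * ψ (E i0 i) - φ (E i0 i) * u)‖
        ≤ ∑ i, ‖φ (E i i0) * (u * ψ (E i0 i) - φ (E i0 i) * u)‖ := norm_sum_le _ _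
      _ ≤ ∑ i, ‖φ (E i i0)‖ * ε := by
          refine Finset.sum_le_sum fun i _ => ?_
          exact (norm_mul_le _ _).trans
            (mul_le_mul_of_nonneg_left (hterm i) (norm_nonneg _))
      _ = C * ε := by rw [← Finset.sum_mul]
      _ ≤ (C + 1) * ε := by nlinarith
      _ = 4⁻¹ := by
          rw [hε]
          field_simp
  -- a is invertible
  have ht_norm : ‖1 - star u * a‖ < 1 := by
    have heq : 1 - star u * a = star u * (u - a) := by
      rw [mul_sub, hu'.1]
    rw [heq]
    calc ‖star u * (u - a)‖ ≤ ‖star u‖ * ‖u - a‖ := norm_mul_le _ _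
      _ ≤ 1 * 4⁻¹ := by
          apply mul_le_mul hsu_norm (by rwa [norm_sub_rev] at hnorm) (norm_nonneg _) zero_le_one
      _ < 1 := by norm_num
  have ha_unit : IsUnit a := by
    have h1 : IsUnit (star u * a) := by
      have := (Units.oneSub (1 - star u * a) ht_norm).isUnit
      simpa using this
    have h2 : a = u * (star u * a) := by rw [← mul_assoc, hu'.2, one_mul]
    rw [h2]
    exact (Unitary.toUnits ⟨u, hu⟩).isUnit.mul h1
  -- the positive invertible element b = a* a
  set b : A := star a * a with hb_def
  have hb_sa : IsSelfAdjoint b := IsSelfAdjoint.star_mul_self a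
  have hb_unit : IsUnit b := ha_unit.star.mul ha_unit
  have hspec : ∀ t ∈ spectrum ℝ b, 0 < t := by
    intro t ht
    rcases lt_or_eq_of_le (spectrum_star_mul_self_nonneg t (hb_def ▸ ht)) with h | h
    · exact h
    · exact absurd ht (h ▸ (spectrum.zero_notMem_iff ℝ).mpr hb_unit)
  -- inverse square root of b via continuous functional calculus
  set f : ℝ → ℝ := fun t => (Real.sqrt t)⁻¹ with hf_def
  have hf : ContinuousOn f (spectrum ℝ b) := by
    intro t ht
    exact (Real.continuous_sqrt.continuousAt.continuousWithinAt).inv₀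
      (Real.sqrt_pos.mpr (hspec t ht)).ne'
  set s : A := cfc f b with hs_def
  have hs_sa : IsSelfAdjoint s := cfc_predicate f b
  have hs_comm : ∀ c : A, c * b = b * c → c * s = s * c := fun c hc =>
    commute_cfc_real hb_sa hc f
  have hbs : b * s = s * b := hs_comm b rfl
  have hsbs : s * b * s = 1 := by
    have hmid : b = cfc (fun t : ℝ => t) b := (cfc_id' ℝ b hb_sa).symm
    rw [hs_def]
    nth_rewrite 2 [hmid]
    rw [← cfc_mul f _ b hf (continuousOn_id' _)]
    rw [← cfc_mul (fun x => f x * x) f b (hf.mul (continuousOn_id' _)) hf]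
    have : (spectrum ℝ b).EqOn (fun t => (f t * t) * f t) (fun _ => 1) := by
      intro t ht
      have htpos := hspec t ht
      have hsq : Real.sqrt t * Real.sqrt t = t := Real.mul_self_sqrt htpos.le
      have hsne : Real.sqrt t ≠ 0 := (Real.sqrt_pos.mpr htpos).ne'
      simp only [hf_def]
      field_simp
      rw [Real.sq_sqrt htpos.le]
    rw [cfc_congr this, cfc_const 1 b hb_sa]
    exact map_one _
  have hssb : s * s * b = 1 := by
    rw [mul_assoc, ← hbs, ← mul_assoc]
    exact hsbs
  -- the exact unitary
  refine ⟨a * s, ?_, ?_⟩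
  · rw [Unitary.mem_iff]
    have hstar : star (a * s) = s * star a := by rw [star_mul, hs_sa.star_eq]
    constructor
    · rw [hstar]
      calc s * star a * (a * s) = s * (star a * a) * s := by
            simp only [mul_assoc]
        _ = 1 := hsbs
    · rw [hstar]
      have hav : a * ↑ha_unit.unit⁻¹ = 1 := by
        have := ha_unit.unit.mul_inv
        rwa [ha_unit.unit_spec] at this
      have hstar_a : star a = b * ↑ha_unit.unit⁻¹ := by
        rw [hb_def, mul_assoc, hav, mul_one]
      calc a * s * (s * star a) = a * (s * s * star a) := by
            simp only [mul_assoc]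
        _ = a * (s * s * b * ↑ha_unit.unit⁻¹) := by
            rw [hstar_a]; simp only [mul_assoc]
        _ = a * ↑ha_unit.unit⁻¹ := by rw [hssb, one_mul]
        _ = 1 := hav
  · intro x
    have hstar_int : star a * φ x = ψ x * star a := by
      have h := hint (star x)
      have h' := congrArg star h
      simp only [star_mul, map_star, star_star] at h'
      exact h'
    have hψb : ψ x * b = b * ψ x := by
      rw [hb_def, ← mul_assoc, hstar_int.symm, mul_assoc, mul_assoc, ← hint x]
    have hψs : ψ x * s = s * ψ x := hs_comm _ hψb
    have hstar : star (a * s) = s * star a := by rw [star_mul, hs_sa.star_eq]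
    have hmain : φ x * (a * s) = (a * s) * ψ x := by
      rw [← mul_assoc, hint x, mul_assoc, hψs, ← mul_assoc]
    have hunit1 : (a * s) * star (a * s) = 1 := by
      rw [hstar]
      have hav : a * ↑ha_unit.unit⁻¹ = 1 := by
        have := ha_unit.unit.mul_inv
        rwa [ha_unit.unit_spec] at this
      have hstar_a : star a = b * ↑ha_unit.unit⁻¹ := by
        rw [hb_def, mul_assoc, hav, mul_one]
      calc a * s * (s * star a) = a * (s * s * star a) := by
            simp only [mul_assoc]
        _ = a * (s * s * b * ↑ha_unit.unit⁻¹) := by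
            rw [hstar_a]; simp only [mul_assoc]
        _ = a * ↑ha_unit.unit⁻¹ := by rw [hssb, one_mul]
        _ = 1 := hav
    calc φ x = φ x * ((a * s) * star (a * s)) := by rw [hunit1, mul_one]
      _ = (φ x * (a * s)) * star (a * s) := by rw [← mul_assoc]
      _ = (a * s) * ψ x * star (a * s) := by rw [hmain]
end
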